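/- Projective invariance of the construction H_λ: for any g ∈ PGL(3,ℝ), any four points A,B,C,D of ℝP² in general position, and any λ ∈ ℝ, one has H_λ(gA, gB, gC, gD) = g·H_λ(A,B,C,D). -/

import Mathlib

open Matrix

noncomputable section

/-- Points of `ℝP²` are represented by nonzero vectors in `ℝ³`;
two vectors represent the same projective point iff they are proportional. -/
def ProjEq (u v : Fin 3 → ℝ) : Prop := ∃ t : ℝ, t ≠ 0 ∧ v = t • u

/-- Cross product in `ℝ³`: the line through two points, or intersection of two lines. -/
def cp (u v : Fin 3 → ℝ) : Fin 3 → ℝ := crossProduct u v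

/-- Four points in general position: every three of the representing vectors
are linearly independent (no three of the points are collinear). -/
def GenPos4 (A B C D : Fin 3 → ℝ) : Prop :=
  LinearIndependent ℝ ![A, B, C] ∧ LinearIndependent ℝ ![A, B, D] ∧
  LinearIndependent ℝ ![A, C, D] ∧ LinearIndependent ℝ ![B, C, D]

/-- P = AC ∩ BD. -/
def Pof (A B C D : Fin 3 → ℝ) : Fin 3 → ℝ := cp (cp A C) (cp B D)

/-- Q = AB ∩ CD. -/
def Qof (A B C D : Fin 3 → ℝ) : Fin 3 → ℝ := cp (cp A B) (cp C D)

/-- H = BC ∩ PQ. -/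
def Hof (A B C D : Fin 3 → ℝ) : Fin 3 → ℝ :=
  cp (cp B C) (cp (Pof A B C D) (Qof A B C D))

/-- `IsH lam A B C D v` says that `v` is a representative of the point `H_lam(A,B,C,D)`:
there are representatives `p` of `P` and `q` of `Q` with `p + q` a representative of `H`,
and `v = p + lam • q`. -/
def IsH (lam : ℝ) (A B C D v : Fin 3 → ℝ) : Prop :=
  ∃ p q : Fin 3 → ℝ, ProjEq (Pof A B C D) p ∧ ProjEq (Qof A B C D) q ∧
    ProjEq (Hof A B C D) (p + q) ∧ v = p + lam • q

/-- Homogeneous coordinates of the vertices of the standard regular pentagon. -/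
def pentV (k : Fin 5) : Fin 3 → ℝ :=
  ![Real.cos (2 * Real.pi * (k : ℕ) / 5), Real.sin (2 * Real.pi * (k : ℕ) / 5), 1]

/- ### Auxiliary lemmas -/

lemma cp_apply (u v : Fin 3 → ℝ) (i : Fin 3) : cp u v i =
    ![u 1 * v 2 - u 2 * v 1, u 2 * v 0 - u 0 * v 2, u 0 * v 1 - u 1 * v 0] i := by
  simp [cp, cross_apply]

/-- Triple cross product: `(x × y) × z = (x⋅z) y - (y⋅z) x`. -/
lemma cpL (x y z : Fin 3 → ℝ) : cp (cp x y) z = (x ⬝ᵥ z) • y - (y ⬝ᵥ z) • x := by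
  funext i
  fin_cases i <;>
    simp [cp_apply, dotProduct, Fin.sum_univ_three] <;> ring

/-- Triple cross product: `z × (x × y) = (z⋅y) x - (z⋅x) y`. -/
lemma cpR (z x y : Fin 3 → ℝ) : cp z (cp x y) = (z ⬝ᵥ y) • x - (z ⬝ᵥ x) • y := by
  funext i
  fin_cases i <;>
    simp [cp_apply, dotProduct, Fin.sum_univ_three] <;> ring

/-- Cross products are covariant under linear maps, up to the determinant. -/
lemma trip_map (m : Matrix (Fin 3) (Fin 3) ℝ) (a b c : Fin 3 → ℝ) :
    (m.mulVec a) ⬝ᵥ cp (m.mulVec b) (m.mulVec c) = m.det * (a ⬝ᵥ cp b c) := by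
  simp [mulVec, dotProduct, cp_apply, det_fin_three, Fin.sum_univ_three]
  ring

lemma trip_cycle (a b c : Fin 3 → ℝ) : c ⬝ᵥ cp a b = a ⬝ᵥ cp b c := by
  simp [dotProduct, cp_apply, Fin.sum_univ_three]; ring

lemma trip_swap (a b c : Fin 3 → ℝ) : b ⬝ᵥ cp a c = -(a ⬝ᵥ cp b c) := by
  simp [dotProduct, cp_apply, Fin.sum_univ_three]; ring

lemma trip_self_left (a b : Fin 3 → ℝ) : a ⬝ᵥ cp a b = 0 := by
  simp [dotProduct, cp_apply, Fin.sum_univ_three]; ring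

lemma trip_self_right (a b : Fin 3 → ℝ) : b ⬝ᵥ cp a b = 0 := by
  simp [dotProduct, cp_apply, Fin.sum_univ_three]; ring

/-- Linear independence of a triple gives a nonzero triple product. -/
lemma indep_trip (A B C : Fin 3 → ℝ) (h : LinearIndependent ℝ ![A, B, C]) :
    A ⬝ᵥ cp B C ≠ 0 := by
  have h2 : LinearIndependent ℝ (Matrix.of ![A, B, C]).row := h
  rw [linearIndependent_rows_iff_isUnit] at h2
  have hd : (Matrix.of ![A, B, C]).det ≠ 0 := by
    intro h0
    exact (h2.map (f := Matrix.detMonoidHom)).ne_zero (by simpa using h0)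
  intro h0
  apply hd
  rw [det_fin_three]
  simp only [of_apply]
  simp [dotProduct, cp_apply, Fin.sum_univ_three] at h0
  simp [Matrix.cons_val_zero, Matrix.cons_val_one]
  linarith [h0]

lemma Pof_eq (A B C D : Fin 3 → ℝ) :
    Pof A B C D = (A ⬝ᵥ cp B D) • C - (C ⬝ᵥ cp B D) • A := cpL A C (cp B D)

lemma Qof_eq (A B C D : Fin 3 → ℝ) :
    Qof A B C D = (A ⬝ᵥ cp C D) • B - (B ⬝ᵥ cp C D) • A := cpL A B (cp C D)

lemma Hof_eq (A B C D : Fin 3 → ℝ) :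
    Hof A B C D = (cp B C ⬝ᵥ Qof A B C D) • Pof A B C D
      - (cp B C ⬝ᵥ Pof A B C D) • Qof A B C D := cpR _ _ _

/-- Coefficient extraction: `P ∈ span{A,C}`, `Q ∈ span{A,B}` with nonzero leading
coefficients, and `A,B,C` independent, force a vanishing combination to be trivial. -/
lemma extract (A B C : Fin 3 → ℝ) (t1 s1 t2 s2 x y : ℝ) (ht1 : t1 ≠ 0) (hs1 : s1 ≠ 0)
    (h3 : C ⬝ᵥ cp A B ≠ 0) (h4 : B ⬝ᵥ cp A C ≠ 0)
    (h : x • (t1 • C - t2 • A) + y • (s1 • B - s2 • A) = 0) : x = 0 ∧ y = 0 := by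
  constructor
  · have h1 : (x • (t1 • C - t2 • A) + y • (s1 • B - s2 • A)) ⬝ᵥ cp A B = 0 := by
      rw [h, zero_dotProduct]
    simp only [add_dotProduct, sub_dotProduct, smul_dotProduct, smul_eq_mul,
      trip_self_left, trip_self_right, mul_zero, sub_zero, zero_sub, sub_self,
      add_zero, zero_add] at h1
    rcases mul_eq_zero.1 h1 with h' | h'
    · exact h'
    · exact absurd h' (mul_ne_zero ht1 h3)
  · have h1 : (x • (t1 • C - t2 • A) + y • (s1 • B - s2 • A)) ⬝ᵥ cp A C = 0 := by
      rw [h, zero_dotProduct]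
    simp only [add_dotProduct, sub_dotProduct, smul_dotProduct, smul_eq_mul,
      trip_self_left, trip_self_right, mul_zero, sub_zero, zero_sub, sub_self,
      add_zero, zero_add] at h1
    rcases mul_eq_zero.1 h1 with h' | h'
    · exact h'
    · exact absurd h' (mul_ne_zero hs1 h4)

/-- Well-definedness: any two representatives produced by the `H_λ` construction
agree projectively. -/
lemma isH_unique (lam : ℝ) (A B C D v w : Fin 3 → ℝ)
    (h1 : A ⬝ᵥ cp B D ≠ 0) (h2 : A ⬝ᵥ cp C D ≠ 0)
    (h3 : C ⬝ᵥ cp A B ≠ 0) (h4 : B ⬝ᵥ cp A C ≠ 0)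
    (hv : IsH lam A B C D v) (hw : IsH lam A B C D w) : ProjEq v w := by
  obtain ⟨p, q, ⟨t1, ht1, hp⟩, ⟨t2, ht2, hq⟩, ⟨t3, ht3, hpq⟩, hveq⟩ := hv
  obtain ⟨p', q', ⟨s1, hs1, hp'⟩, ⟨s2, hs2, hq'⟩, ⟨s3, hs3, hpq'⟩, hweq⟩ := hw
  set P := Pof A B C D with hPdef
  set Q := Qof A B C D with hQdef
  set a := cp B C ⬝ᵥ Q with hadef
  set b := cp B C ⬝ᵥ P with hbdef
  have hH : Hof A B C D = a • P - b • Q := Hof_eq A B C D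
  -- coefficients of representatives of H are forced
  have key : ∀ c u1 u3 : ℝ, u1 • P + u3 • Q = c • (a • P - b • Q) →
      u1 = c * a ∧ u3 = -(c * b) := by
    intro c u1 u3 heq
    have hzero : (u1 - c * a) • P + (u3 + c * b) • Q = 0 := by
      linear_combination (norm := module) heq
    rw [hPdef, hQdef, Pof_eq, Qof_eq] at hzero
    obtain ⟨e1, e2⟩ := extract A B C _ _ _ _ _ _ h1 h2 h3 h4 hzero
    constructor <;> linarith
  have hrel1 : t1 • P + t2 • Q = t3 • (a • P - b • Q) := by
    rw [← hH, ← hpq, hp, hq]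
  have hrel2 : s1 • P + s2 • Q = s3 • (a • P - b • Q) := by
    rw [← hH, ← hpq', hp', hq']
  obtain ⟨kt1, kt2⟩ := key t3 t1 t2 hrel1
  obtain ⟨ks1, ks2⟩ := key s3 s1 s2 hrel2
  refine ⟨s3 * t3⁻¹, mul_ne_zero hs3 (inv_ne_zero ht3), ?_⟩
  rw [hweq, hveq, hp, hq, hp', hq', kt1, kt2, ks1, ks2]
  match_scalars <;> field_simp <;> ring

lemma Pof_map (m : Matrix (Fin 3) (Fin 3) ℝ) (A B C D : Fin 3 → ℝ) :
    Pof (m.mulVec A) (m.mulVec B) (m.mulVec C) (m.mulVec D)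
      = m.det • m.mulVec (Pof A B C D) := by
  rw [Pof_eq, Pof_eq, trip_map, trip_map, Matrix.mulVec_sub, Matrix.mulVec_smul,
    Matrix.mulVec_smul]
  match_scalars <;> ring

lemma Qof_map (m : Matrix (Fin 3) (Fin 3) ℝ) (A B C D : Fin 3 → ℝ) :
    Qof (m.mulVec A) (m.mulVec B) (m.mulVec C) (m.mulVec D)
      = m.det • m.mulVec (Qof A B C D) := by
  rw [Qof_eq, Qof_eq, trip_map, trip_map, Matrix.mulVec_sub, Matrix.mulVec_smul,
    Matrix.mulVec_smul]
  match_scalars <;> ring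

lemma Hof_map (m : Matrix (Fin 3) (Fin 3) ℝ) (A B C D : Fin 3 → ℝ) :
    Hof (m.mulVec A) (m.mulVec B) (m.mulVec C) (m.mulVec D)
      = (m.det ^ 3) • m.mulVec (Hof A B C D) := by
  rw [Hof_eq, Hof_eq, Pof_map, Qof_map, Matrix.mulVec_sub, Matrix.mulVec_smul,
    Matrix.mulVec_smul]
  rw [dotProduct_smul, dotProduct_smul,
    dotProduct_comm (cp (m *ᵥ B) (m *ᵥ C)) (m *ᵥ Qof A B C D),
    dotProduct_comm (cp (m *ᵥ B) (m *ᵥ C)) (m *ᵥ Pof A B C D), trip_map, trip_map,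
    dotProduct_comm (Qof A B C D) (cp B C), dotProduct_comm (Pof A B C D) (cp B C)]
  match_scalars <;> simp only [smul_eq_mul] <;> ring

theorem H_projectively_invariant (g : GL (Fin 3) ℝ) (lam : ℝ) (A B C D : Fin 3 → ℝ)
    (h : GenPos4 A B C D) :
    let m := (g : Matrix (Fin 3) (Fin 3) ℝ)
    ∀ v w : Fin 3 → ℝ, IsH lam A B C D v →
      IsH lam (m.mulVec A) (m.mulVec B) (m.mulVec C) (m.mulVec D) w →
      ProjEq (m.mulVec v) w := by
  intro m v w hv hw
  have hd : m.det ≠ 0 := by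
    have : IsUnit m := ⟨g, rfl⟩
    exact ((Matrix.isUnit_iff_isUnit_det m).1 this).ne_zero
  -- triple products of the original points
  have hABC : A ⬝ᵥ cp B C ≠ 0 := indep_trip A B C h.1
  have hABD : A ⬝ᵥ cp B D ≠ 0 := indep_trip A B D h.2.1
  have hACD : A ⬝ᵥ cp C D ≠ 0 := indep_trip A C D h.2.2.1
  -- triple products of the transformed points
  have h1' : (m.mulVec A) ⬝ᵥ cp (m.mulVec B) (m.mulVec D) ≠ 0 := by
    rw [trip_map]; exact mul_ne_zero hd hABD
  have h2' : (m.mulVec A) ⬝ᵥ cp (m.mulVec C) (m.mulVec D) ≠ 0 := by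
    rw [trip_map]; exact mul_ne_zero hd hACD
  have h3' : (m.mulVec C) ⬝ᵥ cp (m.mulVec A) (m.mulVec B) ≠ 0 := by
    rw [trip_cycle, trip_map]
    exact mul_ne_zero hd hABC
  have h4' : (m.mulVec B) ⬝ᵥ cp (m.mulVec A) (m.mulVec C) ≠ 0 := by
    rw [trip_swap, neg_ne_zero, trip_map]
    exact mul_ne_zero hd hABC
  -- the image of v is a representative of H_lam of the transformed points
  obtain ⟨p, q, ⟨t1, ht1, hp⟩, ⟨t2, ht2, hq⟩, ⟨t3, ht3, hpq⟩, hveq⟩ := hv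
  have hv' : IsH lam (m.mulVec A) (m.mulVec B) (m.mulVec C) (m.mulVec D) (m.mulVec v) := by
    refine ⟨m.mulVec p, m.mulVec q,
      ⟨t1 * m.det⁻¹, mul_ne_zero ht1 (inv_ne_zero hd), ?_⟩,
      ⟨t2 * m.det⁻¹, mul_ne_zero ht2 (inv_ne_zero hd), ?_⟩,
      ⟨t3 * (m.det ^ 3)⁻¹, mul_ne_zero ht3 (inv_ne_zero (pow_ne_zero 3 hd)), ?_⟩, ?_⟩
    · rw [Pof_map, hp, Matrix.mulVec_smul]
      match_scalars; field_simp
    · rw [Qof_map, hq, Matrix.mulVec_smul]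
      match_scalars; field_simp
    · rw [Hof_map, ← Matrix.mulVec_add, hpq, Matrix.mulVec_smul]
      match_scalars; field_simp
    · rw [hveq, Matrix.mulVec_add, Matrix.mulVec_smul]
  exact isH_unique lam (m.mulVec A) (m.mulVec B) (m.mulVec C) (m.mulVec D)
    (m.mulVec v) w h1' h2' h3' h4' hv' hw
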